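/- arXiv:1408.0675 — 6 statements merged into one kernel-verified Lean document; each statement's English description precedes it below -/
import Mathlib

section
/- Let b, β, c, γ be real numbers with b ≠ 0 and β ≠ 0, assume c − γ ≥ 0 and D := (c − γ)² + 4bβ > 0, and set χ₊ := (sgn β)·((c−γ) + √D)/(2|b|) and χ₋ := (sgn β)·((c−γ) − √D)/(2|b|). Then: (visible case) if b > 0 and β > 0 then χ₋ < 0 < χ₊; (visible-invisible cases) if b > 0 and β < 0 then χ₊ < χ₋ < 0, and if b < 0 and β > 0 then 0 < χ₋ < χ₊; (invisible case) if b < 0 and β < 0 then χ₊ < 0 < χ₋. -/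
/-- Signs of the eigenvector slopes `χ± = sgn(β)·((c-γ) ± √D)/(2|b|)`
(with `c - γ ≥ 0`, `D = (c-γ)² + 4bβ > 0`): visible (`b>0, β>0`): `χ₋ < 0 < χ₊`;
visible-invisible (`b>0, β<0`): `χ₊ < χ₋ < 0`; (`b<0, β>0`): `0 < χ₋ < χ₊`;
invisible (`b<0, β<0`): `χ₊ < 0 < χ₋`. -/
theorem stmt_5 (b β c γ : ℝ) (hb : b ≠ 0) (hβ : β ≠ 0) (hcγ : 0 ≤ c - γ)
    (D : ℝ) (hD : D = (c - γ) ^ 2 + 4 * b * β) (hDpos : 0 < D)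
    (χp χm : ℝ)
    (hχp : χp = Real.sign β * ((c - γ) + Real.sqrt D) / (2 * |b|))
    (hχm : χm = Real.sign β * ((c - γ) - Real.sqrt D) / (2 * |b|)) :
    (0 < b → 0 < β → χm < 0 ∧ 0 < χp) ∧
    (0 < b → β < 0 → χp < χm ∧ χm < 0) ∧
    (b < 0 → 0 < β → 0 < χm ∧ χm < χp) ∧
    (b < 0 → β < 0 → χp < 0 ∧ 0 < χm) := by
  have hs0 : 0 < Real.sqrt D := Real.sqrt_pos.mpr hDpos
  have hss : Real.sqrt D ^ 2 = D := Real.sq_sqrt hDpos.le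
  refine ⟨?_, ?_, ?_, ?_⟩
  · intro hbp hβp
    have hsgn : Real.sign β = 1 := Real.sign_of_pos hβp
    have habs : |b| = b := abs_of_pos hbp
    have hgt : c - γ < Real.sqrt D := by
      rw [show c - γ = Real.sqrt ((c-γ)^2) from (Real.sqrt_sq hcγ).symm]
      apply Real.sqrt_lt_sqrt (by positivity)
      nlinarith
    constructor
    · rw [hχm, hsgn, habs]
      apply div_neg_of_neg_of_pos <;> nlinarith
    · rw [hχp, hsgn, habs]
      apply div_pos <;> nlinarith
  · intro hbp hβn
    have hsgn : Real.sign β = -1 := Real.sign_of_neg hβn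
    have habs : |b| = b := abs_of_pos hbp
    have hlt : Real.sqrt D < c - γ := by
      rw [show c - γ = Real.sqrt ((c-γ)^2) from (Real.sqrt_sq hcγ).symm]
      apply Real.sqrt_lt_sqrt hDpos.le
      nlinarith
    constructor
    · rw [hχp, hχm, hsgn, habs]
      apply (div_lt_div_iff_of_pos_right (by nlinarith)).mpr
      nlinarith
    · rw [hχm, hsgn, habs]
      apply div_neg_of_neg_of_pos <;> nlinarith
  · intro hbn hβp
    have hsgn : Real.sign β = 1 := Real.sign_of_pos hβp
    have habs : |b| = -b := abs_of_neg hbn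
    have hlt : Real.sqrt D < c - γ := by
      rw [show c - γ = Real.sqrt ((c-γ)^2) from (Real.sqrt_sq hcγ).symm]
      apply Real.sqrt_lt_sqrt hDpos.le
      nlinarith
    constructor
    · rw [hχm, hsgn, habs]
      apply div_pos <;> nlinarith
    · rw [hχm, hχp, hsgn, habs]
      apply (div_lt_div_iff_of_pos_right (by nlinarith)).mpr
      nlinarith
  · intro hbn hβn
    have hsgn : Real.sign β = -1 := Real.sign_of_neg hβn
    have habs : |b| = -b := abs_of_neg hbn
    have hgt : c - γ < Real.sqrt D := by
      rw [show c - γ = Real.sqrt ((c-γ)^2) from (Real.sqrt_sq hcγ).symm]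
      apply Real.sqrt_lt_sqrt (by positivity)
      nlinarith
    constructor
    · rw [hχp, hsgn, habs]
      apply div_neg_of_neg_of_pos <;> nlinarith
    · rw [hχm, hsgn, habs]
      apply div_pos <;> nlinarith
end

section
/- Let φ : ℝ → ℝ be a Sotomayor–Teixeira regularization function. Let U ⊆ ℝ² be open and let a⁺, a⁻ : U → ℝ be continuously differentiable with a⁺(p)·a⁻(p) < 0 for all p ∈ U. Then there exists a continuously differentiable function h₀ : U → ℝ such that for every p ∈ U: h₀(p) ∈ (−1, 1) and φ(h₀(p)) = −(a⁺(p) + a⁻(p))/(a⁺(p) − a⁻(p)). In other words, the critical manifold of the regularized system is, over the sliding region, the graph of a C¹ function y = h₀(x,z). -/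
/-- A Sotomayor–Teixeira regularization function: `C¹`, equal to `±1` for `y ≷ ±1`,
valued in `(-1,1)` and strictly increasing (positive derivative) on `(-1,1)`. -/
def STRegularization (φ : ℝ → ℝ) : Prop :=
  ContDiff ℝ 1 φ ∧ (∀ y, 1 ≤ y → φ y = 1) ∧ (∀ y, y ≤ -1 → φ y = -1) ∧
  (∀ y, -1 < y → y < 1 → -1 < φ y ∧ φ y < 1) ∧
  (∀ y, -1 < y → y < 1 → 0 < deriv φ y)

/-- Over an open sliding region `U` (where `a⁺·a⁻ < 0`), the critical
manifold of the regularized system is the graph of a `C¹` function `h₀` with values in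
`(-1,1)` satisfying `φ(h₀(p)) = −(a⁺(p)+a⁻(p))/(a⁺(p)−a⁻(p))` on `U`. -/
theorem stmt_9 (φ : ℝ → ℝ) (hφ : STRegularization φ)
    (U : Set (ℝ × ℝ)) (hU : IsOpen U)
    (ap am : ℝ × ℝ → ℝ) (hap : ContDiffOn ℝ 1 ap U) (ham : ContDiffOn ℝ 1 am U)
    (hneg : ∀ p ∈ U, ap p * am p < 0) :
    ∃ h₀ : ℝ × ℝ → ℝ, ContDiffOn ℝ 1 h₀ U ∧
      ∀ p ∈ U, -1 < h₀ p ∧ h₀ p < 1 ∧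
        φ (h₀ p) = -(ap p + am p) / (ap p - am p) := by
  obtain ⟨hC1, h1, hm1, hval, hder⟩ := hφ
  have φ1 : φ 1 = 1 := h1 1 le_rfl
  have φm1 : φ (-1) = -1 := hm1 (-1) le_rfl
  -- strict monotonicity on Icc
  have hmono : StrictMonoOn φ (Set.Icc (-1 : ℝ) 1) := by
    apply strictMonoOn_of_deriv_pos (convex_Icc _ _) hC1.continuous.continuousOn
    intro x hx
    rw [interior_Icc] at hx
    exact hder x hx.1 hx.2
  -- surjectivity onto Ioo (-1) 1
  have hsurj : Set.Ioo (-1 : ℝ) 1 ⊆ φ '' Set.Ioo (-1 : ℝ) 1 := by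
    have := intermediate_value_Ioo (by norm_num : (-1 : ℝ) ≤ 1) hC1.continuous.continuousOn
    rwa [φm1, φ1] at this
  -- choose an inverse ψ on Ioo (-1) 1
  have hex : ∀ y : ℝ, ∃ x : ℝ, y ∈ Set.Ioo (-1 : ℝ) 1 → x ∈ Set.Ioo (-1 : ℝ) 1 ∧ φ x = y := by
    intro y
    by_cases h : y ∈ Set.Ioo (-1 : ℝ) 1
    · obtain ⟨x, hx, hxy⟩ := hsurj h
      exact ⟨x, fun _ => ⟨hx, hxy⟩⟩
    · exact ⟨0, fun h' => absurd h' h⟩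
  choose ψ hψ using hex
  have hleft : ∀ x ∈ Set.Ioo (-1 : ℝ) 1, ψ (φ x) = x := by
    intro x hx
    have hφx : φ x ∈ Set.Ioo (-1 : ℝ) 1 := by
      obtain ⟨h1', h2'⟩ := hval x hx.1 hx.2
      exact ⟨h1', h2'⟩
    obtain ⟨hmem, heq⟩ := hψ (φ x) hφx
    exact hmono.injOn (Set.Ioo_subset_Icc_self hmem) (Set.Ioo_subset_Icc_self hx) heq
  -- ψ is C¹ on Ioo (-1) 1
  have hψC1 : ContDiffOn ℝ 1 ψ (Set.Ioo (-1 : ℝ) 1) := by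
    intro y hy
    obtain ⟨x, hx, hxy⟩ := hsurj hy
    have hd : deriv φ x ≠ 0 := ne_of_gt (hder x hx.1 hx.2)
    have hder' : HasDerivAt φ (deriv φ x) x :=
      ((hC1.differentiable one_ne_zero) x).hasDerivAt
    have hf' := hder'.hasFDerivAt_equiv hd
    have cda : ContDiffAt ℝ 1 φ x := hC1.contDiffAt
    have hstr := cda.hasStrictFDerivAt' hf' one_ne_zero
    have hg_cd : ContDiffAt ℝ 1 (cda.localInverse hf' one_ne_zero) (φ x) :=
      cda.to_localInverse hf' one_ne_zero
    have hri : ∀ᶠ z in nhds (φ x),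
        φ ((cda.localInverse hf' one_ne_zero) z) = z := hstr.eventually_right_inverse
    have hcont : ContinuousAt (cda.localInverse hf' one_ne_zero) (φ x) :=
      hstr.localInverse_continuousAt
    have himg : (cda.localInverse hf' one_ne_zero) (φ x) = x :=
      cda.localInverse_apply_image hf' one_ne_zero
    have hmem : ∀ᶠ z in nhds (φ x),
        (cda.localInverse hf' one_ne_zero) z ∈ Set.Ioo (-1 : ℝ) 1 := by
      have : Set.Ioo (-1 : ℝ) 1 ∈ nhds ((cda.localInverse hf' one_ne_zero) (φ x)) := by
        rw [himg]; exact isOpen_Ioo.mem_nhds hx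
      exact hcont.eventually_mem this
    have heq : ψ =ᶠ[nhds (φ x)] (cda.localInverse hf' one_ne_zero) := by
      filter_upwards [hri, hmem] with z h1' h2'
      calc ψ z = ψ (φ ((cda.localInverse hf' one_ne_zero) z)) := by rw [h1']
        _ = (cda.localInverse hf' one_ne_zero) z := hleft _ h2'
    have : ContDiffAt ℝ 1 ψ (φ x) := hg_cd.congr_of_eventuallyEq heq
    rw [hxy] at this
    exact this.contDiffWithinAt
  -- the target function g
  set g : ℝ × ℝ → ℝ := fun p => -(ap p + am p) / (ap p - am p) with hg_def
  have hdenom : ∀ p ∈ U, ap p - am p ≠ 0 := by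
    intro p hp h
    have h2 := hneg p hp
    have heq : am p = ap p := by linarith
    rw [heq] at h2
    nlinarith [sq_nonneg (ap p)]
  have hgC1 : ContDiffOn ℝ 1 g U := ((hap.add ham).neg).div (hap.sub ham) hdenom
  have hgmem : ∀ p ∈ U, g p ∈ Set.Ioo (-1 : ℝ) 1 := by
    intro p hp
    have hd := hdenom p hp
    have hn := hneg p hp
    have hsq : (g p) ^ 2 < 1 := by
      rw [hg_def]
      simp only
      rw [div_pow, div_lt_one (by positivity)]
      nlinarith
    have := (sq_lt_one_iff_abs_lt_one (a := g p)).mp hsq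
    exact ⟨neg_lt_of_abs_lt this, lt_of_abs_lt this⟩
  refine ⟨ψ ∘ g, hψC1.comp hgC1 hgmem, fun p hp => ?_⟩
  obtain ⟨hmem, heq⟩ := hψ (g p) (hgmem p hp)
  exact ⟨hmem.1, hmem.2, heq⟩
end

section
/- Let φ : ℝ → ℝ be a Sotomayor–Teixeira regularization function, let b ≠ 0 and β ≠ 0 be real, let g⁺, g⁻ : ℝ² → ℝ be continuous with g⁺(0,0) = 0 and g⁻(0,0) = 0, and set X₂⁺(x,z) = (|b| + g⁺(x,z))·z and X₂⁻(x,z) = (−|β| + g⁻(x,z))·x. Then there exists an open neighborhood U of the origin in ℝ² such that for all (x,z) ∈ U and all y ∈ (−1, 1): if x < 0 and z < 0 then φ′(y)·(X₂⁺(x,z) − X₂⁻(x,z)) < 0, and if x > 0 and z > 0 then φ′(y)·(X₂⁺(x,z) − X₂⁻(x,z)) > 0. (Thus the critical manifold is normally hyperbolic and attracting over the stable sliding region and normally hyperbolic and repelling over the unstable sliding region.) -/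
/-- Near the two-fold, with `X₂⁺(x,z) = (|b| + g⁺(x,z))·z` and
`X₂⁻(x,z) = (−|β| + g⁻(x,z))·x`, for `y ∈ (-1,1)` the quantity
`φ′(y)·(X₂⁺ − X₂⁻)` is negative on the stable sliding quadrant (`x<0, z<0`) and
positive on the unstable sliding quadrant (`x>0, z>0`). -/
theorem stmt_10 (φ : ℝ → ℝ) (hφ : STRegularization φ)
    (b β : ℝ) (hb : b ≠ 0) (hβ : β ≠ 0)
    (gp gm : ℝ × ℝ → ℝ) (hgp : Continuous gp) (hgm : Continuous gm)
    (hgp0 : gp (0, 0) = 0) (hgm0 : gm (0, 0) = 0) :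
    ∃ U : Set (ℝ × ℝ), IsOpen U ∧ ((0 : ℝ), (0 : ℝ)) ∈ U ∧
      ∀ x z : ℝ, (x, z) ∈ U → ∀ y : ℝ, -1 < y → y < 1 →
        (x < 0 → z < 0 →
          deriv φ y * ((|b| + gp (x, z)) * z - (-|β| + gm (x, z)) * x) < 0) ∧
        (x > 0 → z > 0 →
          deriv φ y * ((|b| + gp (x, z)) * z - (-|β| + gm (x, z)) * x) > 0) := by
  obtain ⟨_, _, _, _, hderiv⟩ := hφ
  have hb' : 0 < |b| := abs_pos.mpr hb
  have hβ' : 0 < |β| := abs_pos.mpr hβ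
  refine ⟨gp ⁻¹' Set.Ioo (-|b|) |b| ∩ gm ⁻¹' Set.Ioo (-|β|) |β|,
    (isOpen_Ioo.preimage hgp).inter (isOpen_Ioo.preimage hgm), ?_, ?_⟩
  · simp only [Set.mem_inter_iff, Set.mem_preimage, Set.mem_Ioo, hgp0, hgm0]
    exact ⟨⟨by linarith, hb'⟩, by linarith, hβ'⟩
  · rintro x z ⟨⟨h1, _⟩, ⟨_, h4⟩⟩ y hy1 hy2
    have hd := hderiv y hy1 hy2
    have hp : 0 < |b| + gp (x, z) := by linarith
    have hm : -|β| + gm (x, z) < 0 := by linarith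
    constructor
    · intro hx hz
      have : (|b| + gp (x, z)) * z - (-|β| + gm (x, z)) * x < 0 := by nlinarith
      exact mul_neg_of_pos_of_neg hd this
    · intro hx hz
      have : 0 < (|b| + gp (x, z)) * z - (-|β| + gm (x, z)) * x := by nlinarith
      exact mul_pos hd this
end

section
/- Let b, β, c, γ be real numbers with b ≠ 0 and β ≠ 0, let f : ℝ → ℝ be any function, and let χ ∈ ℝ satisfy |b|·sgn(β)·χ² − (c − γ)·χ − |β|·sgn(b) = 0. Set λ := −c + |b|·sgn(β)·χ and w₀ := −|b|·χ/|β|. Define F : ℝ³ → ℝ³ by F(x, w, z) = (c/|β| + sgn(β)·w, f(w)·(−|b|·z + |β|·x·w), sgn(b) + (γ/|b|)·w). Then at every point p = (x, w₀, −χ·x) of the line L = {(x, w₀, −χ·x) : x ∈ ℝ} one has F₂(p) = 0, F₃(p) = −χ·F₁(p), and F₁(p) = −λ/|β|; consequently for every x₀ ∈ ℝ the curve ψ(t) = (x₀ − λ·t/|β|, w₀, −χ·(x₀ − λ·t/|β|)) satisfies ψ′(t) = F(ψ(t)) for all t ∈ ℝ, so L is an invariant line on which the motion is ẋ = −λ/|β|.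 -/
/-- For the blown-up vector field
`F(x,w,z) = (c/|β| + sgn(β)w, f(w)(−|b|z + |β|xw), sgn(b) + (γ/|b|)w)` and a root `χ` of
`|b|·sgn(β)·χ² − (c−γ)χ − |β|·sgn(b) = 0`, with `λ = −c + |b|·sgn(β)·χ` and
`w₀ = −|b|χ/|β|`, along the line `L = {(x, w₀, −χx)}` one has `F₂ = 0`, `F₃ = −χ·F₁`,
`F₁ = −λ/|β|`; consequently `ψ(t) = (x₀ − λt/|β|, w₀, −χ(x₀ − λt/|β|))` solves
`ψ′ = F(ψ)`, so `L` is an invariant line on which the motion is `ẋ = −λ/|β|`. -/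
theorem stmt_12 (b β c γ : ℝ) (hb : b ≠ 0) (hβ : β ≠ 0) (f : ℝ → ℝ)
    (χ : ℝ) (hχ : |b| * Real.sign β * χ ^ 2 - (c - γ) * χ - |β| * Real.sign b = 0)
    (lam w₀ : ℝ) (hlam : lam = -c + |b| * Real.sign β * χ) (hw : w₀ = -|b| * χ / |β|)
    (F : ℝ × ℝ × ℝ → ℝ × ℝ × ℝ)
    (hF : ∀ x w z : ℝ, F (x, w, z) =
      (c / |β| + Real.sign β * w, f w * (-|b| * z + |β| * x * w),
        Real.sign b + (γ / |b|) * w)) :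
    (∀ x : ℝ,
      (F (x, w₀, -χ * x)).2.1 = 0 ∧
      (F (x, w₀, -χ * x)).2.2 = -χ * (F (x, w₀, -χ * x)).1 ∧
      (F (x, w₀, -χ * x)).1 = -lam / |β|) ∧
    (∀ x₀ t : ℝ,
      HasDerivAt
        (fun s : ℝ => ((x₀ - lam * s / |β|, w₀, -χ * (x₀ - lam * s / |β|)) : ℝ × ℝ × ℝ))
        (F (x₀ - lam * t / |β|, w₀, -χ * (x₀ - lam * t / |β|))) t) := by
  have hbβ : |β| ≠ 0 := abs_ne_zero.mpr hβ
  have hbb : |b| ≠ 0 := abs_ne_zero.mpr hb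
  have key : ∀ x : ℝ,
      (F (x, w₀, -χ * x)).2.1 = 0 ∧
      (F (x, w₀, -χ * x)).2.2 = -χ * (F (x, w₀, -χ * x)).1 ∧
      (F (x, w₀, -χ * x)).1 = -lam / |β| := by
    intro x
    rw [hF]
    refine ⟨?_, ?_, ?_⟩
    · simp only []
      rw [hw]; field_simp; ring
    · simp only []
      rw [hw, hlam] at *
      field_simp
      linear_combination (-1 : ℝ) * hχ
    · simp only []
      rw [hw, hlam]; field_simp; ring
  refine ⟨key, fun x₀ t => ?_⟩
  have h1 : HasDerivAt (fun s : ℝ => x₀ - lam * s / |β|) (-(lam / |β|)) t := by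
    simpa using ((((hasDerivAt_id t).const_mul lam).div_const |β|).const_sub x₀)
  have h3 : HasDerivAt (fun s : ℝ => -χ * (x₀ - lam * s / |β|)) (-χ * -(lam / |β|)) t :=
    h1.const_mul (-χ)
  have h2 : HasDerivAt (fun _ : ℝ => w₀) (0 : ℝ) t := hasDerivAt_const t w₀
  have hd := h1.prodMk (h2.prodMk h3)
  obtain ⟨k1, k2, k3⟩ := key (x₀ - lam * t / |β|)
  have hFp : F (x₀ - lam * t / |β|, w₀, -χ * (x₀ - lam * t / |β|)) =
      (-(lam / |β|), 0, -χ * -(lam / |β|)) := by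
    ext
    · rw [k3]; ring
    · exact k1
    · rw [k2, k3]; ring
  rw [hFp]; exact hd
end

section
/- Let b, β, c, γ be real numbers with b ≠ 0, β ≠ 0, and D := (c − γ)² + 4bβ > 0. Define G(z) := −|b|·sgn(β)·z + c, P(z) := |b|·sgn(β)·z² − (c − γ)·z − |β|·sgn(b), λ± := −(c+γ)/2 ± √D/2, and χ± := (sgn β)·((c−γ) ± √D)/(2|b|). Then −G(χ₊) = λ₊, −P′(χ₊) = −√D, 2G(χ₊) = −2λ₊, and −G(χ₋) = λ₋, −P′(χ₋) = √D, 2G(χ₋) = −2λ₋. Consequently, for any k ∈ ℝ, the 3×3 matrix with rows (−G(χ±), 0, 0), (k, −P′(χ±), 0), (0, 0, 2G(χ±)) has characteristic polynomial (X − λ±)·(X − μ±)·(X + 2λ±) with μ₊ = −√D and μ₋ = +√D; i.e. the eigenvalues of the linearization of the desingularized reduced flow on the blown-up center manifold at the equilibrium p_{a,1,±} = (0, χ±, 0) are (λ±, ∓√D, −2λ±). -/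
open Polynomial

lemma charpoly3 (a d e k : ℝ) :
    (!![a, 0, 0; k, d, 0; 0, 0, e] : Matrix (Fin 3) (Fin 3) ℝ).charpoly
      = (X - C a) * (X - C d) * (X - C e) := by
  rw [Matrix.charpoly, Matrix.det_fin_three]
  simp [Matrix.charmatrix_apply, Matrix.one_apply]

lemma derivP (a m x d : ℝ) : deriv (fun z => a * z ^ 2 - m * z - x) d = 2 * a * d - m := by
  have h : HasDerivAt (fun z => a * z ^ 2 - m * z - x) (a * (2 * d ^ 1) - m * 1) d :=
    (((hasDerivAt_pow 2 d).const_mul a).sub ((hasDerivAt_id d).const_mul m)).sub_const x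
  rw [h.deriv]; ring

/-- With `G(z) = −|b|·sgn(β)·z + c`,
`P(z) = |b|·sgn(β)·z² − (c−γ)z − |β|·sgn(b)`, `λ± = −(c+γ)/2 ± √D/2` and
`χ± = sgn(β)((c−γ) ± √D)/(2|b|)` (`D = (c−γ)² + 4bβ > 0`): one has `−G(χ±) = λ±`,
`−P′(χ±) = ∓√D`, `2G(χ±) = −2λ±`, and for any `k` the block-triangular Jacobian of the
reduced desingularized flow at `p_{a,1,±}` has characteristic polynomial
`(X − λ±)(X − μ±)(X + 2λ±)` with `μ₊ = −√D`, `μ₋ = √D`. -/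
theorem stmt_13 (b β c γ : ℝ) (hb : b ≠ 0) (hβ : β ≠ 0)
    (D : ℝ) (hD : D = (c - γ) ^ 2 + 4 * b * β) (hDpos : 0 < D)
    (G P : ℝ → ℝ)
    (hG : ∀ z, G z = -|b| * Real.sign β * z + c)
    (hP : ∀ z, P z = |b| * Real.sign β * z ^ 2 - (c - γ) * z - |β| * Real.sign b)
    (lp lm χp χm : ℝ)
    (hlp : lp = -(c + γ) / 2 + Real.sqrt D / 2)
    (hlm : lm = -(c + γ) / 2 - Real.sqrt D / 2)
    (hχp : χp = Real.sign β * ((c - γ) + Real.sqrt D) / (2 * |b|))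
    (hχm : χm = Real.sign β * ((c - γ) - Real.sqrt D) / (2 * |b|)) :
    (-G χp = lp ∧ -(deriv P χp) = -Real.sqrt D ∧ 2 * G χp = -2 * lp) ∧
    (-G χm = lm ∧ -(deriv P χm) = Real.sqrt D ∧ 2 * G χm = -2 * lm) ∧
    (∀ k : ℝ,
      (!![-G χp, 0, 0; k, -(deriv P χp), 0; 0, 0, 2 * G χp] :
          Matrix (Fin 3) (Fin 3) ℝ).charpoly
        = (X - C lp) * (X - C (-Real.sqrt D)) * (X + C (2 * lp)) ∧
      (!![-G χm, 0, 0; k, -(deriv P χm), 0; 0, 0, 2 * G χm] :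
          Matrix (Fin 3) (Fin 3) ℝ).charpoly
        = (X - C lm) * (X - C (Real.sqrt D)) * (X + C (2 * lm))) := by
  have habs : |b| ≠ 0 := abs_ne_zero.mpr hb
  have hs : Real.sign β * Real.sign β = 1 := by
    rcases hβ.lt_or_gt with h | h
    · simp [Real.sign_of_neg h]
    · simp [Real.sign_of_pos h]
  have keyp : |b| * Real.sign β * χp = ((c - γ) + Real.sqrt D) / 2 := by
    rw [hχp]; field_simp; linear_combination ((c - γ) + Real.sqrt D) * hs
  have keym : |b| * Real.sign β * χm = ((c - γ) - Real.sqrt D) / 2 := by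
    rw [hχm]; field_simp; linear_combination ((c - γ) - Real.sqrt D) * hs
  have hPe : P = fun z => |b| * Real.sign β * z ^ 2 - (c - γ) * z - |β| * Real.sign b :=
    funext hP
  have hdp : deriv P χp = Real.sqrt D := by
    rw [hPe, derivP]; linear_combination 2 * keyp
  have hdm : deriv P χm = -Real.sqrt D := by
    rw [hPe, derivP]; linear_combination 2 * keym
  have hGp : -G χp = lp := by
    rw [hG, hlp]; linear_combination keyp
  have hGm : -G χm = lm := by
    rw [hG, hlm]; linear_combination keym
  refine ⟨⟨hGp, by rw [hdp], by linarith [hGp]⟩, ⟨hGm, by rw [hdm, neg_neg], by linarith [hGm]⟩, ?_⟩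
  intro k
  have e2p : 2 * G χp = -(2 * lp) := by linarith [hGp]
  have e2m : 2 * G χm = -(2 * lm) := by linarith [hGm]
  constructor
  · rw [charpoly3, hGp, hdp, e2p]; simp only [map_neg]; ring
  · rw [charpoly3, hGm, hdm, e2m]; simp only [map_neg]; ring
end

section
/- Let b, β, c, γ be real numbers with b ≠ 0 and β ≠ 0, let f : ℝ → ℝ be any function, and define F : ℝ³ → ℝ³ by F(x, w, z) = (c/|β| + sgn(β)·w, f(w)·(−|b|·z + |β|·x·w), sgn(b) + (γ/|b|)·w). Then for all (x, w, z) ∈ ℝ³: F(−x, w, −z) = (F₁(x,w,z), −F₂(x,w,z), F₃(x,w,z)). Consequently, if ψ(t) = (x(t), w(t), z(t)) satisfies ψ′(t) = F(ψ(t)) on an interval I, then the curve t ↦ (−x(−t), w(−t), −z(−t)) satisfies the same differential equation on −I; i.e. the system is time-reversible with respect to the symmetry (x, w, z, t) ↦ (−x, w, −z, −t). -/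
/-- The blown-up vector field
`F(x,w,z) = (c/|β| + sgn(β)w, f(w)(−|b|z + |β|xw), sgn(b) + (γ/|b|)w)` satisfies
`F(−x, w, −z) = (F₁(x,w,z), −F₂(x,w,z), F₃(x,w,z))`; hence if `ψ` solves `ψ′ = F(ψ)`
on an interval `I`, then `t ↦ (−x(−t), w(−t), −z(−t))` solves the same equation on `−I`:
the system is time-reversible under `(x,w,z,t) ↦ (−x,w,−z,−t)`. -/
theorem stmt_14 (b β c γ : ℝ) (hb : b ≠ 0) (hβ : β ≠ 0) (f : ℝ → ℝ)
    (F : ℝ × ℝ × ℝ → ℝ × ℝ × ℝ)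
    (hF : ∀ x w z : ℝ, F (x, w, z) =
      (c / |β| + Real.sign β * w, f w * (-|b| * z + |β| * x * w),
        Real.sign b + (γ / |b|) * w)) :
    (∀ x w z : ℝ,
      F (-x, w, -z) = ((F (x, w, z)).1, -(F (x, w, z)).2.1, (F (x, w, z)).2.2)) ∧
    (∀ (I : Set ℝ) (ψ : ℝ → ℝ × ℝ × ℝ),
      (∀ t ∈ I, HasDerivAt ψ (F (ψ t)) t) →
      ∀ t : ℝ, -t ∈ I →
        HasDerivAt (fun s : ℝ => ((-(ψ (-s)).1, (ψ (-s)).2.1, -(ψ (-s)).2.2) : ℝ × ℝ × ℝ))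
          (F (-(ψ (-t)).1, (ψ (-t)).2.1, -(ψ (-t)).2.2)) t) := by
  have hsym : ∀ x w z : ℝ,
      F (-x, w, -z) = ((F (x, w, z)).1, -(F (x, w, z)).2.1, (F (x, w, z)).2.2) := by
    intro x w z
    rw [hF, hF]
    refine Prod.ext rfl (Prod.ext ?_ rfl)
    simp only
    ring
  refine ⟨hsym, ?_⟩
  intro I ψ hψ t ht
  have hd := hψ (-t) ht
  have hneg : HasDerivAt (fun s : ℝ => -s) (-1 : ℝ) t := (hasDerivAt_id t).neg
  have h2 : HasDerivAt (fun s : ℝ => ψ (-s)) (-(F (ψ (-t)))) t := by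
    simpa [Function.comp_def] using hd.scomp t hneg
  set L : (ℝ × ℝ × ℝ) →L[ℝ] (ℝ × ℝ × ℝ) :=
    ContinuousLinearMap.prod (-(ContinuousLinearMap.fst ℝ ℝ (ℝ × ℝ)))
      (ContinuousLinearMap.prod
        ((ContinuousLinearMap.fst ℝ ℝ ℝ).comp (ContinuousLinearMap.snd ℝ ℝ (ℝ × ℝ)))
        (-((ContinuousLinearMap.snd ℝ ℝ ℝ).comp (ContinuousLinearMap.snd ℝ ℝ (ℝ × ℝ))))) with hL
  have h3 : HasDerivAt (fun s : ℝ => L (ψ (-s))) (L (-(F (ψ (-t))))) t :=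
    L.hasFDerivAt.comp_hasDerivAt t h2
  have hLval : ∀ p : ℝ × ℝ × ℝ, L p = (-p.1, p.2.1, -p.2.2) := fun p => rfl
  have key : L (-(F (ψ (-t)))) = F (-(ψ (-t)).1, (ψ (-t)).2.1, -(ψ (-t)).2.2) := by
    rw [hLval]
    have := hsym (ψ (-t)).1 (ψ (-t)).2.1 (ψ (-t)).2.2
    simp only [Prod.mk.eta] at this ⊢
    rw [this]
    simp
  rw [key] at h3
  simpa [hLval] using h3
end
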